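/- Let d ≥ 2 and let v₀,...,v_d ∈ ℝ^d \ {0} be vertices of a d-simplex containing the origin, with wᵢ = vᵢ/|vᵢ|. If min over i<j of wᵢ · wⱼ equals -1/d, then wᵢ · wⱼ = -1/d for all i ≠ j, i.e. the wᵢ form the vertices of a regular simplex inscribed in the unit sphere. -/
import Mathlib


open scoped RealInnerProductSpace

/-- Equality case: if the minimum over `i < j` of `wᵢ · wⱼ` (with `wᵢ = vᵢ/‖vᵢ‖`)
equals `-1/d`, then all pairwise inner products equal `-1/d`, i.e. the `wᵢ` are
the vertices of a regular simplex inscribed in the unit sphere. -/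
theorem regular_simplex_of_min_inner_eq
    (d : ℕ) (hd : 2 ≤ d)
    (v : Fin (d + 1) → EuclideanSpace ℝ (Fin d))
    (hindep : AffineIndependent ℝ v)
    (hne : ∀ i, v i ≠ 0)
    (h0 : (0 : EuclideanSpace ℝ (Fin d)) ∈ convexHull ℝ (Set.range v))
    (hge : ∀ i j : Fin (d + 1), i < j →
      -(1 / (d : ℝ)) ≤ ⟪‖v i‖⁻¹ • v i, ‖v j‖⁻¹ • v j⟫)
    (hattained : ∃ i j : Fin (d + 1), i < j ∧
      ⟪‖v i‖⁻¹ • v i, ‖v j‖⁻¹ • v j⟫ = -(1 / (d : ℝ))) :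
    ∀ i j : Fin (d + 1), i ≠ j →
      ⟪‖v i‖⁻¹ • v i, ‖v j‖⁻¹ • v j⟫ = -(1 / (d : ℝ)) := by
  classical
  have hdpos : (0 : ℝ) < d := by positivity
  set w : Fin (d + 1) → EuclideanSpace ℝ (Fin d) := fun i => ‖v i‖⁻¹ • v i with hw
  have hnorm : ∀ i, ‖v i‖ ≠ 0 := fun i => norm_ne_zero_iff.mpr (hne i)
  set g : Fin (d + 1) → Fin (d + 1) → ℝ := fun i j => ⟪w i, w j⟫ with hg
  have hgsymm : ∀ i j, g i j = g j i := fun i j => real_inner_comm _ _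
  have hgdiag : ∀ i, g i i = 1 := by
    intro i
    have hwe : w i = ‖v i‖⁻¹ • v i := rfl
    have hwn : ‖w i‖ = 1 := by
      rw [hwe, norm_smul, norm_inv, norm_norm, inv_mul_cancel₀ (hnorm i)]
    have hge : g i i = ⟪w i, w i⟫ := rfl
    rw [hge, real_inner_self_eq_norm_sq, hwn]
    norm_num
  have hge' : ∀ i j, i ≠ j → -(1 / (d : ℝ)) ≤ g i j := by
    intro i j hij
    rcases lt_or_gt_of_ne hij with h | h
    · exact hge i j h
    · rw [hgsymm]; exact hge j i h
  -- extract convex combination weights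
  rw [convexHull_range_eq_exists_affineCombination] at h0
  obtain ⟨s, μ0, hμ0nn, hμ0sum, hμ0comb⟩ := h0
  set μ : Fin (d + 1) → ℝ := fun i => if i ∈ s then μ0 i else 0 with hμ
  have hμnn : ∀ i, 0 ≤ μ i := by
    intro i
    by_cases h : i ∈ s
    · simpa [hμ, h] using hμ0nn i h
    · simp [hμ, h]
  have hμsum : ∑ i, μ i = 1 := by
    rw [hμ]
    rw [Finset.sum_ite_mem, Finset.univ_inter]
    exact hμ0sum
  have hμv : ∑ i, μ i • v i = 0 := by
    have := Finset.affineCombination_eq_linear_combination s v μ0 hμ0sum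
    rw [this] at hμ0comb
    rw [← hμ0comb]
    rw [← Finset.sum_subset (Finset.subset_univ s) (by intro i _ hi; simp [hμ, hi])]
    exact Finset.sum_congr rfl fun i hi => by simp [hμ, hi]
  set c : Fin (d + 1) → ℝ := fun i => μ i * ‖v i‖ with hc
  have hcnn : ∀ i, 0 ≤ c i := fun i => mul_nonneg (hμnn i) (norm_nonneg _)
  have hcw : ∑ i, c i • w i = 0 := by
    rw [← hμv]
    refine Finset.sum_congr rfl fun i _ => ?_
    rw [hc, hw]
    simp only [smul_smul]
    rw [mul_assoc, mul_inv_cancel₀ (hnorm i), mul_one]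
  have key : ∑ i, ∑ j, c i * c j * g i j = 0 := by
    have h1 : ⟪∑ i, c i • w i, ∑ j, c j • w j⟫ = (0 : ℝ) := by rw [hcw]; simp
    rw [sum_inner] at h1
    rw [← h1]
    refine Finset.sum_congr rfl fun i _ => ?_
    rw [inner_sum]
    refine Finset.sum_congr rfl fun j _ => ?_
    rw [real_inner_smul_left, real_inner_smul_right, hg]
    ring
  set A : ℝ := ∑ i, c i with hA
  set B : ℝ := ∑ i, c i ^ 2 with hB
  set q : Fin (d + 1) → Fin (d + 1) → ℝ :=
    fun i j => if i = j then 0 else c i * c j * (g i j + 1 / d) with hq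
  have hqnn : ∀ i j, 0 ≤ q i j := by
    intro i j
    rw [hq]
    by_cases h : i = j
    · simp [h]
    · simp only [h, if_false]
      have h1 := hge' i j h
      have h2 : (0 : ℝ) ≤ g i j + 1 / d := by linarith
      exact mul_nonneg (mul_nonneg (hcnn i) (hcnn j)) h2
  -- value of the off-diagonal sum
  have hQval : ∑ i, ∑ j, q i j = (1 / d) * A ^ 2 - (1 + 1 / d) * B := by
    have hrow : ∀ i, ∑ j, q i j =
        (∑ j, c i * c j * (g i j + 1 / d)) - c i * c i * (g i i + 1 / d) := by
      intro i
      have hterm : ∀ j, q i j = c i * c j * (g i j + 1 / d) -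
          (if j = i then c i * c i * (g i i + 1 / d) else 0) := by
        intro j
        by_cases h : j = i
        · subst h; simp [hq]
        · have h' : i ≠ j := fun e => h e.symm
          simp [hq, h', h]
      rw [Finset.sum_congr rfl fun j _ => hterm j, Finset.sum_sub_distrib,
        Finset.sum_ite_eq' Finset.univ i]
      simp
    rw [Finset.sum_congr rfl fun i _ => hrow i]
    rw [Finset.sum_sub_distrib]
    have h2 : ∑ i, ∑ j, c i * c j * (g i j + 1 / d)
        = (∑ i, ∑ j, c i * c j * g i j) + (1 / d) * (A * A) := by
      rw [hA, Finset.sum_mul_sum, Finset.mul_sum, ← Finset.sum_add_distrib]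
      refine Finset.sum_congr rfl fun i _ => ?_
      rw [Finset.mul_sum, ← Finset.sum_add_distrib]
      exact Finset.sum_congr rfl fun j _ => by ring
    have h3 : ∑ i, c i * c i * (g i i + 1 / d) = (1 + 1 / d) * B := by
      rw [hB, Finset.mul_sum]
      exact Finset.sum_congr rfl fun i _ => by rw [hgdiag i]; ring
    rw [h2, h3, key]
    ring
  -- sum of squared differences identity
  have hDval : ∑ i, ∑ j, (c i - c j) ^ 2 = 2 * (((d : ℝ) + 1) * B - A ^ 2) := by
    have hrow : ∀ i, ∑ j, (c i - c j) ^ 2 = ((d : ℝ) + 1) * c i ^ 2 - 2 * c i * A + B := by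
      intro i
      have hx : ∀ j, (c i - c j) ^ 2 = c i ^ 2 - 2 * c i * c j + c j ^ 2 := fun j => by ring
      rw [Finset.sum_congr rfl fun j _ => hx j]
      rw [Finset.sum_add_distrib, Finset.sum_sub_distrib, Finset.sum_const,
        Finset.card_univ, Fintype.card_fin, ← Finset.mul_sum, ← hA, ← hB, nsmul_eq_mul]
      push_cast
      ring
    have e1 : ∑ i, (((d : ℝ) + 1) * c i ^ 2) = ((d : ℝ) + 1) * B := by
      rw [hB, Finset.mul_sum]
    have e2 : ∑ i, 2 * c i * A = 2 * A * A := by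
      rw [← Finset.sum_mul, ← Finset.mul_sum, ← hA]
    calc ∑ i, ∑ j, (c i - c j) ^ 2
        = ∑ i, (((d : ℝ) + 1) * c i ^ 2 - 2 * c i * A + B) :=
          Finset.sum_congr rfl fun i _ => hrow i
      _ = ((∑ i, (((d : ℝ) + 1) * c i ^ 2)) - ∑ i, 2 * c i * A) + ∑ _i : Fin (d + 1), B := by
          rw [Finset.sum_add_distrib, Finset.sum_sub_distrib]
      _ = (((d : ℝ) + 1) * B - 2 * A * A) + ((d : ℝ) + 1) * B := by
          rw [e1, e2, Finset.sum_const, Finset.card_univ, Fintype.card_fin, nsmul_eq_mul]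
          push_cast
          ring
      _ = 2 * (((d : ℝ) + 1) * B - A ^ 2) := by ring
  have hDnn : 0 ≤ ∑ i, ∑ j, (c i - c j) ^ 2 :=
    Finset.sum_nonneg fun i _ => Finset.sum_nonneg fun j _ => sq_nonneg _
  have hQnn : 0 ≤ ∑ i, ∑ j, q i j :=
    Finset.sum_nonneg fun i _ => Finset.sum_nonneg fun j _ => hqnn i j
  -- Q = -(1/(2d)) * D
  have hQD : ∑ i, ∑ j, q i j = -(1 / (2 * d)) * ∑ i, ∑ j, (c i - c j) ^ 2 := by
    rw [hQval, hDval]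
    field_simp
    ring
  have hQzero : ∑ i, ∑ j, q i j = 0 := by
    have h1 : ∑ i, ∑ j, q i j ≤ 0 := by
      rw [hQD]
      exact mul_nonpos_of_nonpos_of_nonneg (neg_nonpos.mpr (by positivity)) hDnn
    linarith
  have hDzero : ∑ i, ∑ j, (c i - c j) ^ 2 = 0 := by
    have h := (hQD.symm.trans hQzero)
    rcases mul_eq_zero.mp h with h' | h'
    · exfalso
      have : (0:ℝ) < 1 / (2 * d) := by positivity
      rw [neg_eq_zero] at h'
      linarith
    · exact h'
  -- all c i equal
  have hceq : ∀ i j, c i = c j := by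
    intro i j
    have h1 := (Finset.sum_eq_zero_iff_of_nonneg
      (fun i _ => Finset.sum_nonneg fun j _ => sq_nonneg (c i - c j))).mp hDzero
      i (Finset.mem_univ i)
    have h2 := (Finset.sum_eq_zero_iff_of_nonneg (fun j _ => sq_nonneg (c i - c j))).mp h1
      j (Finset.mem_univ j)
    have := sq_eq_zero_iff.mp h2
    linarith [sub_eq_zero.mp this]
  -- c is positive
  have hcpos : ∀ i, 0 < c i := by
    intro i
    rcases (hcnn i).lt_or_eq with h | h
    · exact h
    · exfalso
      have hall : ∀ j, c j = 0 := fun j => (hceq i j) ▸ h.symm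
      have hμ0 : ∀ j, μ j = 0 := by
        intro j
        have := hall j
        rw [hc] at this
        rcases mul_eq_zero.mp this with h' | h'
        · exact h'
        · exact absurd h' (hnorm j)
      rw [Finset.sum_congr rfl fun j _ => hμ0 j] at hμsum
      simp at hμsum
  -- each q term vanishes
  have hqzero : ∀ i j, q i j = 0 := by
    intro i j
    have h1 := (Finset.sum_eq_zero_iff_of_nonneg
      (fun i _ => Finset.sum_nonneg fun j _ => hqnn i j)).mp hQzero i (Finset.mem_univ i)
    exact (Finset.sum_eq_zero_iff_of_nonneg (fun j _ => hqnn i j)).mp h1 j (Finset.mem_univ j)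
  intro i j hij
  have h1 := hqzero i j
  rw [hq] at h1
  simp only [hij, if_false] at h1
  have hpos : 0 < c i * c j := mul_pos (hcpos i) (hcpos j)
  have h2 : g i j + 1 / d = 0 := by
    rcases mul_eq_zero.mp h1 with h' | h'
    · exact absurd h' (ne_of_gt hpos)
    · exact h'
  have : g i j = -(1 / d) := by linarith
  exact this
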